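/- Let (R, m, k) be a commutative noetherian local ring, let φ : F → M be an irreducible epimorphism of finitely generated R-modules with F free, assume End_R(M) is a local ring, let ι : R → F be a split monomorphism, and suppose that φ ∘ ι : R → M is surjective. Then the socle Soc R = {x ∈ R : mx = 0} is a one-dimensional k-vector space (i.e., R has type one), the map ι is an isomorphism (so F is free of rank one), and there is an isomorphism ρ : R/Soc R → M such that φ ∘ ι = ρ ∘ π, where π : R → R/Soc R is the natural surjection. -/

import Mathlib

universe u

/-- A homomorphism `f : M → N` of `R`-modules is *irreducible* if it is neither a split
monomorphism nor a split epimorphism, and for every factorization `f = h ∘ g` through a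
finitely generated `R`-module `L`, either `g` is a split monomorphism or `h` is a split
epimorphism. -/
def IsIrreducibleHom {R : Type u} [CommRing R] {M N : Type u} [AddCommGroup M] [Module R M]
    [AddCommGroup N] [Module R N] (f : M →ₗ[R] N) : Prop :=
  (¬ ∃ r : N →ₗ[R] M, r ∘ₗ f = LinearMap.id) ∧
  (¬ ∃ s : N →ₗ[R] M, f ∘ₗ s = LinearMap.id) ∧
  ∀ (L : Type u) [AddCommGroup L] [Module R L], Module.Finite R L →
    ∀ (g : M →ₗ[R] L) (h : L →ₗ[R] N), h ∘ₗ g = f →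
      (∃ r : L →ₗ[R] M, r ∘ₗ g = LinearMap.id) ∨ (∃ s : N →ₗ[R] L, h ∘ₗ s = LinearMap.id)

private lemma idem_zero_or_one {A : Type*} [CommRing A] [IsLocalRing A] {e : A}
    (h : e * e = e) : e = 0 ∨ e = 1 := by
  rcases IsLocalRing.isUnit_or_isUnit_one_sub_self e with hu | hu
  · right
    obtain ⟨u, rfl⟩ := hu
    calc (u : A) = ↑u⁻¹ * (↑u * ↑u) := by rw [← mul_assoc, Units.inv_mul, one_mul]
      _ = ↑u⁻¹ * ↑u := by rw [h]
      _ = 1 := Units.inv_mul u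
  · left
    obtain ⟨v, hv⟩ := hu
    have h0 : e * (1 - e) = 0 := by rw [mul_sub, mul_one, h, sub_self]
    calc e = e * ((1 - e) * (↑v⁻¹ : A)) := by rw [← hv, Units.mul_inv, mul_one]
      _ = (e * (1 - e)) * (↑v⁻¹ : A) := by ring
      _ = 0 := by rw [h0, zero_mul]

/-- Let `φ : F → M` be an irreducible epimorphism of finitely generated modules over a
commutative noetherian local ring `(R, 𝔪, k)` with `F` free, assume `End_R(M)` is local,
let `ι : R → F` be a split monomorphism, and suppose `φ ∘ ι` is surjective. Then
`Soc R = (0 :_R 𝔪)` is one-dimensional over `k` (i.e. `Soc R ≅ k`), `ι` is an isomorphism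
(so `F` has rank one), and there is an isomorphism `ρ : R / Soc R → M` with
`φ ∘ ι = ρ ∘ π` for the natural surjection `π : R → R / Soc R`. -/
theorem type_one_of_comp_split_mono_surjective
    {R : Type u} [CommRing R] [IsNoetherianRing R] [IsLocalRing R]
    {F M : Type u} [AddCommGroup F] [Module R F] [Module.Finite R F] [Module.Free R F]
    [AddCommGroup M] [Module R M] [Module.Finite R M]
    (φ : F →ₗ[R] M) (hsurj : Function.Surjective φ) (hirr : IsIrreducibleHom φ)
    (hEnd : IsLocalRing (Module.End R M))
    (ι : R →ₗ[R] F) (hι : ∃ r : F →ₗ[R] R, r ∘ₗ ι = LinearMap.id)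
    (hφι : Function.Surjective (φ ∘ₗ ι)) :
    Nonempty ((Submodule.annihilator (IsLocalRing.maximalIdeal R)) ≃ₗ[R]
        (IsLocalRing.ResidueField R)) ∧
    Function.Bijective ι ∧
    ∃ ρ : (R ⧸ Submodule.annihilator (IsLocalRing.maximalIdeal R)) ≃ₗ[R] M,
      ρ.toLinearMap ∘ₗ (Submodule.annihilator (IsLocalRing.maximalIdeal R)).mkQ = φ ∘ₗ ι := by
  classical
  obtain ⟨hnsm, hnse, hfac⟩ := hirr
  obtain ⟨r, hr⟩ := hι
  have hrι : ∀ c : R, r (ι c) = c := fun c => LinearMap.congr_fun hr c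
  set π' : R →ₗ[R] M := φ ∘ₗ ι with hπ'def
  have hπ'surj : Function.Surjective π' := hφι
  have hπ'app : ∀ c : R, π' c = φ (ι c) := fun c => rfl
  -- M is nontrivial
  have hMnt : Nontrivial M := by
    rcases subsingleton_or_nontrivial M with hM | hM
    · exact absurd ⟨0, Subsingleton.elim _ _⟩ hnse
    · exact hM
  -- π' is not a split epimorphism
  have hπnse : ¬ ∃ s : M →ₗ[R] R, π' ∘ₗ s = LinearMap.id := by
    rintro ⟨s, hs⟩
    exact hnse ⟨ι ∘ₗ s, by
      ext m
      exact LinearMap.congr_fun hs m⟩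
  -- lift φ along π' using projectivity of F
  obtain ⟨ψ, hψ⟩ : ∃ ψ : F →ₗ[R] R, π' ∘ₗ ψ = φ :=
    Module.projective_lifting_property π' φ hπ'surj
  -- apply irreducibility to the factorization φ = π' ∘ ψ
  rcases hfac R (Module.Finite.self R) ψ π' hψ with ⟨ρ₀, hρ₀⟩ | hsplit
  swap
  · exact absurd hsplit hπnse
  -- ρ₀ : R →ₗ F with ρ₀ ∘ ψ = id
  have hρ₀ψ : ∀ f : F, ρ₀ (ψ f) = f := fun f => LinearMap.congr_fun hρ₀ f
  have hιinj : Function.Injective ι := by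
    intro c₁ c₂ h12
    have := congrArg r h12
    rwa [hrι, hrι] at this
  set a : R := ψ (ι 1) with hadef
  have hψι : ∀ c : R, ψ (ι c) = c * a := by
    intro c
    have : ψ (ι (c • (1 : R))) = c • ψ (ι 1) := by rw [map_smul, map_smul]
    simpa [smul_eq_mul] using this
  have hab : a * r (ρ₀ 1) = 1 := by
    have h1 : ρ₀ (ψ (ι 1)) = ι 1 := hρ₀ψ (ι 1)
    have h2 : ψ (ι 1) = (1 : R) • a := by simpa using hψι 1
    have h3 : ρ₀ (a • (1 : R)) = ι 1 := by
      rw [← h1, h2]; congr 1; simp [smul_eq_mul, mul_comm]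
    have h4 : a • ρ₀ (1 : R) = ι 1 := by rw [← map_smul, h3]
    have := congrArg r h4
    rw [map_smul, hrι] at this
    simpa [smul_eq_mul] using this
  have hunit : IsUnit a := IsUnit.of_mul_eq_one _ hab
  obtain ⟨u, hu⟩ := hunit
  set ψ' : F →ₗ[R] R := (↑u⁻¹ : R) • ψ with hψ'def
  have hψ'ι : ∀ c : R, ψ' (ι c) = c := by
    intro c
    have : ψ' (ι c) = (↑u⁻¹ : R) * (c * a) := by
      rw [hψ'def]; simp [LinearMap.smul_apply, hψι c, smul_eq_mul]
    rw [this, ← hu]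
    calc (↑u⁻¹ : R) * (c * ↑u) = c * (↑u⁻¹ * ↑u) := by ring
      _ = c := by rw [Units.inv_mul, mul_one]
  have hψ'inj : Function.Injective ψ' := by
    intro f g hfg
    have h1 : (↑u : R) • ψ' f = (↑u : R) • ψ' g := by rw [hfg]
    have h2 : ψ f = ψ g := by
      have e : ∀ x : F, (↑u : R) • ψ' x = ψ x := by
        intro x
        show (↑u : R) • ((↑u⁻¹ : R) • ψ x) = ψ x
        rw [smul_smul, Units.mul_inv, one_smul]
      rwa [e, e] at h1
    have := congrArg ρ₀ h2
    rwa [hρ₀ψ, hρ₀ψ] at this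
  have hιψ' : ∀ f : F, ι (ψ' f) = f := by
    intro f
    apply hψ'inj
    exact hψ'ι (ψ' f)
  have hιbij : Function.Bijective ι := ⟨hιinj, fun f => ⟨ψ' f, hιψ' f⟩⟩
  have hπψ' : ∀ f : F, π' (ψ' f) = φ f := by
    intro f
    rw [hπ'app, hιψ']
  -- the kernel I of π'
  set I : Ideal R := LinearMap.ker π' with hIdef
  have hInetop : I ≠ ⊤ := by
    intro htop
    obtain ⟨m₀, hm₀⟩ := exists_ne (0 : M)
    obtain ⟨c, hc⟩ := hπ'surj m₀
    have hcI : c ∈ I := htop ▸ Submodule.mem_top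
    rw [hIdef, LinearMap.mem_ker] at hcI
    exact hm₀ (by rw [← hc, hcI])
  have hIlem : I ≤ IsLocalRing.maximalIdeal R := IsLocalRing.le_maximalIdeal hInetop
  have hInebot : I ≠ ⊥ := by
    intro hbot
    apply hπnse
    have hinj : Function.Injective π' := by
      rw [← LinearMap.ker_eq_bot]; exact hbot
    let e := LinearEquiv.ofBijective π' ⟨hinj, hπ'surj⟩
    refine ⟨e.symm.toLinearMap, ?_⟩
    ext m
    have h2 := e.apply_symm_apply m
    change π' (e.symm m) = m at h2
    exact h2
  -- Claim A : I is contained in every nonzero principal ideal generated by its elements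
  have claimA : ∀ x : R, x ∈ I → x ≠ 0 → I ≤ Submodule.span R {x} := by
    intro x hxI hxne
    set J : Ideal R := Submodule.span R {x} with hJdef
    have hJI : J ≤ LinearMap.ker π' := by
      rw [hJdef, Submodule.span_le, Set.singleton_subset_iff]
      exact hxI
    have hJnetop : J ≠ ⊤ := fun h =>
      hInetop (top_le_iff.mp (h ▸ hJI : (⊤ : Ideal R) ≤ I))
    set h : (R ⧸ J) →ₗ[R] M := Submodule.liftQ J π' hJI with hhdef
    set g : F →ₗ[R] (R ⧸ J) := J.mkQ ∘ₗ ψ' with hgdef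
    have hcomp : h ∘ₗ g = φ := by
      ext f
      simp only [hhdef, hgdef, LinearMap.comp_apply, Submodule.mkQ_apply,
        Submodule.liftQ_apply]
      exact hπψ' f
    rcases hfac (R ⧸ J) inferInstance g h hcomp with ⟨r₁, hr₁⟩ | ⟨s, hs⟩
    · exfalso
      have h1 : g (ι x) = 0 := by
        simp only [hgdef, LinearMap.comp_apply, hψ'ι, Submodule.mkQ_apply]
        exact (Submodule.Quotient.mk_eq_zero J).mpr (Submodule.mem_span_singleton_self x)
      have h2 : ι x = 0 := by
        have := LinearMap.congr_fun hr₁ (ι x)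
        simp only [LinearMap.comp_apply, LinearMap.id_apply] at this
        rw [← this, h1, map_zero]
      exact hxne (hιinj (by rw [h2, map_zero]))
    · -- h split epi : show h is injective hence I ≤ J
      have hnt : Nontrivial (R ⧸ J) := Ideal.Quotient.nontrivial_iff.mpr hJnetop
      have hloc : IsLocalRing (R ⧸ J) :=
        IsLocalRing.of_surjective' (Ideal.Quotient.mk J) Ideal.Quotient.mk_surjective
      have hsh : ∀ m₀ : M, h (s m₀) = m₀ := fun m₀ => LinearMap.congr_fun hs m₀
      set p : (R ⧸ J) →ₗ[R] (R ⧸ J) := s ∘ₗ h with hpdef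
      have hpp : ∀ q, p (p q) = p q := by
        intro q
        simp only [hpdef, LinearMap.comp_apply, hsh]
      set ebar : R ⧸ J := p (Submodule.Quotient.mk 1) with hedef
      have hmk : ∀ c : R, (Submodule.Quotient.mk c : R ⧸ J) = c • Submodule.Quotient.mk 1 := by
        intro c
        rw [← Submodule.Quotient.mk_smul, smul_eq_mul, mul_one]
      have hpapp : ∀ c : R, p (Submodule.Quotient.mk c) = c • ebar := by
        intro c
        rw [hmk c, map_smul, hedef]
      obtain ⟨e₀, he₀⟩ := Ideal.Quotient.mk_surjective ebar
      have he₀' : (Submodule.Quotient.mk e₀ : R ⧸ J) = ebar := he₀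
      have hidem : ebar * ebar = ebar := by
        have h1 : p ebar = ebar := by
          rw [hedef]; exact hpp _
        have h2 : p ebar = e₀ • ebar := by
          conv_lhs => rw [← he₀']
          exact hpapp e₀
        have h3 : (e₀ : R) • ebar = ebar * ebar := by
          conv_lhs => rw [← he₀']
          calc e₀ • (Submodule.Quotient.mk e₀ : R ⧸ J)
              = Submodule.Quotient.mk (e₀ • e₀) := (Submodule.Quotient.mk_smul J e₀ e₀).symm
            _ = (Ideal.Quotient.mk J) (e₀ * e₀) := by rw [smul_eq_mul]; rfl
            _ = (Ideal.Quotient.mk J) e₀ * (Ideal.Quotient.mk J) e₀ := map_mul _ _ _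
            _ = ebar * ebar := by rw [he₀]
        rw [← h3, ← h2, h1]
      rcases idem_zero_or_one hidem with hzero | hone
      · exfalso
        obtain ⟨m₀, hm₀⟩ := exists_ne (0 : M)
        have h1 : s m₀ = 0 := by
          obtain ⟨c, hc⟩ := Ideal.Quotient.mk_surjective (s m₀)
          have hc' : (Submodule.Quotient.mk c : R ⧸ J) = s m₀ := hc
          have : p (s m₀) = s (h (s m₀)) := rfl
          rw [hsh] at this
          rw [← this, ← hc', hpapp, hzero, smul_zero]
        exact hm₀ (by rw [← hsh m₀, h1, map_zero])
      · have hpid : ∀ q : R ⧸ J, p q = q := by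
          intro q
          obtain ⟨c, hc⟩ := Ideal.Quotient.mk_surjective q
          have hc' : (Submodule.Quotient.mk c : R ⧸ J) = q := hc
          rw [← hc', hpapp, hone]
          exact (hmk c).symm
        have hinj : Function.Injective h := by
          intro q₁ q₂ h12
          have : s (h q₁) = s (h q₂) := by rw [h12]
          rwa [show s (h q₁) = p q₁ from rfl, show s (h q₂) = p q₂ from rfl,
            hpid, hpid] at this
        intro i hiI
        have h1 : h (Submodule.Quotient.mk i) = 0 := by
          rw [hhdef, Submodule.liftQ_apply]
          exact LinearMap.mem_ker.mp hiI
        have h2 : (Submodule.Quotient.mk i : R ⧸ J) = 0 := by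
          apply hinj
          rw [h1, map_zero]
        exact (Submodule.Quotient.mk_eq_zero J).mp h2
  -- a generator of I
  obtain ⟨z, hzI, hzne⟩ := Submodule.exists_mem_ne_zero_of_ne_bot hInebot
  have hIz : I = Submodule.span R {z} :=
    le_antisymm (claimA z hzI hzne)
      ((Submodule.span_le).mpr (Set.singleton_subset_iff.mpr hzI))
  have hπ'z : π' z = 0 := LinearMap.mem_ker.mp hzI
  -- Claim B : z ∈ Soc
  set Soc : Ideal R := Submodule.annihilator (IsLocalRing.maximalIdeal R) with hSocdef
  have hzSoc : z ∈ Soc := by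
    rw [hSocdef, Submodule.mem_annihilator]
    intro t ht
    by_contra hzt
    have hzt' : z * t ≠ 0 := by simpa [smul_eq_mul] using hzt
    have hztI : z * t ∈ I := Ideal.mul_mem_right t I hzI
    have hle := claimA (z * t) hztI hzt'
    obtain ⟨s₀, hs₀⟩ := Submodule.mem_span_singleton.mp (hle hzI)
    have hs₀' : s₀ * (z * t) = z := by simpa [smul_eq_mul] using hs₀
    have hzz : z * (1 - t * s₀) = 0 := by
      calc z * (1 - t * s₀) = z - s₀ * (z * t) := by ring
        _ = 0 := by rw [hs₀', sub_self]
    have hmem : t * s₀ ∈ IsLocalRing.maximalIdeal R := Ideal.mul_mem_right s₀ _ ht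
    have hun : IsUnit (1 - t * s₀) :=
      IsLocalRing.isUnit_one_sub_self_of_mem_nonunits _
        ((IsLocalRing.mem_maximalIdeal _).mp hmem)
    obtain ⟨v, hv⟩ := hun
    apply hzne
    calc z = z * ((1 - t * s₀) * ↑v⁻¹) := by rw [← hv, Units.mul_inv, mul_one]
      _ = (z * (1 - t * s₀)) * ↑v⁻¹ := by ring
      _ = 0 := by rw [hzz, zero_mul]
  have hISoc : I ≤ Soc := by
    rw [hIz, Submodule.span_le, Set.singleton_subset_iff]
    exact hzSoc
  have hzm : z ∈ IsLocalRing.maximalIdeal R := hIlem hzI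
  have hzz0 : z * z = 0 := by
    have := Submodule.mem_annihilator.mp hzSoc z hzm
    simpa [smul_eq_mul] using this
  -- Claim C : Soc ≤ I
  have hSocI : Soc ≤ I := by
    intro x hxSoc
    by_contra hxI
    have hxann : ∀ t ∈ IsLocalRing.maximalIdeal R, x * t = 0 := by
      intro t ht
      simpa [smul_eq_mul] using Submodule.mem_annihilator.mp hxSoc t ht
    set W : Submodule R (R × R) := Submodule.span R {((z, -x) : R × R)} with hWdef
    have hWker : W ≤ LinearMap.ker (π' ∘ₗ LinearMap.fst R R R) := by
      rw [hWdef, Submodule.span_le, Set.singleton_subset_iff]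
      simp only [SetLike.mem_coe, LinearMap.mem_ker, LinearMap.comp_apply,
        LinearMap.fst_apply]
      exact hπ'z
    set h : ((R × R) ⧸ W) →ₗ[R] M :=
      Submodule.liftQ W (π' ∘ₗ LinearMap.fst R R R) hWker with hhdef
    set g : F →ₗ[R] ((R × R) ⧸ W) := W.mkQ ∘ₗ (LinearMap.inl R R R) ∘ₗ ψ' with hgdef
    have hcomp : h ∘ₗ g = φ := by
      ext f
      simp only [hhdef, hgdef, LinearMap.comp_apply, Submodule.mkQ_apply,
        Submodule.liftQ_apply, LinearMap.inl_apply, LinearMap.fst_apply]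
      exact hπψ' f
    have hzx_mem : ((z, -x) : R × R) ∈ W := by
      rw [hWdef]; exact Submodule.mem_span_singleton_self _
    rcases hfac ((R × R) ⧸ W) inferInstance g h hcomp with ⟨r₁, hr₁⟩ | ⟨s, hs⟩
    · -- split mono case
      set ρ'' : ((R × R) ⧸ W) →ₗ[R] R := ψ' ∘ₗ r₁ with hρ''def
      have hp1 : ρ'' (W.mkQ (1, 0)) = 1 := by
        have h1 : g (ι 1) = W.mkQ (1, 0) := by
          simp only [hgdef, LinearMap.comp_apply, hψ'ι, LinearMap.inl_apply]
        have h2 := LinearMap.congr_fun hr₁ (ι 1)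
        simp only [LinearMap.comp_apply, LinearMap.id_apply] at h2
        calc ρ'' (W.mkQ (1, 0)) = ψ' (r₁ (g (ι 1))) := by rw [h1]; rfl
          _ = ψ' (ι 1) := by rw [h2]
          _ = 1 := hψ'ι 1
      set q : R := ρ'' (W.mkQ (0, 1)) with hqdef
      have hmk0 : W.mkQ ((z, -x) : R × R) = 0 := by
        rw [Submodule.mkQ_apply]
        exact (Submodule.Quotient.mk_eq_zero W).mpr hzx_mem
      have hdecomp : ((z, -x) : R × R)
          = z • ((1 : R), (0 : R)) + (-x) • ((0 : R), (1 : R)) := by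
        simp [Prod.ext_iff, smul_eq_mul]
      have hval : ρ'' (W.mkQ ((z, -x) : R × R))
          = z • ρ'' (W.mkQ (1, 0)) + (-x) • ρ'' (W.mkQ (0, 1)) := by
        rw [hdecomp, map_add, map_smul, map_smul, map_add, map_smul, map_smul]
      rw [hmk0, map_zero, hp1, ← hqdef, smul_eq_mul, smul_eq_mul, mul_one] at hval
      have hzq : z = x * q := by linear_combination -hval
      by_cases hq : IsUnit q
      · obtain ⟨v, hv⟩ := hq
        apply hxI
        have hx' : x = z * ↑v⁻¹ := by
          calc x = x * (↑v * ↑v⁻¹) := by rw [Units.mul_inv, mul_one]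
            _ = (x * ↑v) * ↑v⁻¹ := by ring
            _ = z * ↑v⁻¹ := by rw [hv, ← hzq]
        rw [hx']
        exact Ideal.mul_mem_right _ I hzI
      · have hq' : x * q = 0 :=
          hxann q ((IsLocalRing.mem_maximalIdeal _).mpr (mem_nonunits_iff.mpr hq))
        exact hzne (by rw [hzq, hq'])
    · -- split epi case
      have hsh : ∀ m₀ : M, h (s m₀) = m₀ := fun m₀ => LinearMap.congr_fun hs m₀
      obtain ⟨⟨a, b⟩, hab2⟩ := Submodule.mkQ_surjective W (s (π' 1))
      have hπa : π' a = π' 1 := by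
        have h1 : h (W.mkQ (a, b)) = π' a := by
          rw [hhdef, Submodule.mkQ_apply, Submodule.liftQ_apply]; rfl
        calc π' a = h (W.mkQ (a, b)) := h1.symm
          _ = h (s (π' 1)) := by rw [hab2]
          _ = π' 1 := hsh _
      have haI : a - 1 ∈ I := by
        rw [hIdef, LinearMap.mem_ker, map_sub, hπa, sub_self]
      obtain ⟨d, hd⟩ := Submodule.mem_span_singleton.mp (hIz ▸ haI)
      have hzsl : z • s (π' 1) = 0 := by
        rw [← map_smul]
        have h2 : z • π' 1 = 0 := by rw [← map_smul, smul_eq_mul, mul_one, hπ'z]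
        rw [h2, map_zero]
      have hmemW : ((z * a, z * b) : R × R) ∈ W := by
        have h3 : W.mkQ (z • ((a, b) : R × R)) = 0 := by
          rw [map_smul, hab2, hzsl]
        rw [Submodule.mkQ_apply, Submodule.Quotient.mk_eq_zero] at h3
        simpa [Prod.smul_mk, smul_eq_mul] using h3
      obtain ⟨c, hc⟩ := Submodule.mem_span_singleton.mp (hWdef ▸ hmemW)
      have hc1 : c * z = z * a := by
        have := congrArg Prod.fst hc
        simpa [smul_eq_mul] using this
      have hc2 : c * (-x) = z * b := by
        have := congrArg Prod.snd hc
        simpa [smul_eq_mul] using this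
      have hza : z * a = z := by
        have ha1 : a = 1 + d * z := by rw [← smul_eq_mul, hd]; ring
        calc z * a = z + d * (z * z) := by rw [ha1]; ring
          _ = z := by rw [hzz0, mul_zero, add_zero]
      have h1c : (1 - c) * z = 0 := by
        calc (1 - c) * z = z * a - c * z := by rw [hza]; ring
          _ = 0 := by rw [hc1, sub_self]
      by_cases hcu : IsUnit (1 - c)
      · obtain ⟨v, hv⟩ := hcu
        apply hzne
        calc z = (↑v⁻¹ * (1 - c)) * z := by rw [← hv, Units.inv_mul, one_mul]
          _ = ↑v⁻¹ * ((1 - c) * z) := by ring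
          _ = 0 := by rw [h1c, mul_zero]
      · have hcunit : IsUnit c := by
          have h4 := IsLocalRing.isUnit_one_sub_self_of_mem_nonunits (1 - c)
            (mem_nonunits_iff.mpr hcu)
          simpa using h4
        obtain ⟨v, hv⟩ := hcunit
        apply hxI
        have hx' : x = (-(↑v⁻¹ * b)) * z := by
          have h5 : x = -(↑v⁻¹ * (z * b)) := by
            calc x = ↑v⁻¹ * (↑v * x) := by rw [← mul_assoc, Units.inv_mul, one_mul]
              _ = ↑v⁻¹ * (-(c * (-x))) := by rw [hv]; ring
              _ = -(↑v⁻¹ * (z * b)) := by rw [hc2]; ring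
          rw [h5]; ring
        rw [hx']
        exact Ideal.mul_mem_left I _ hzI
  have hI_Soc : I = Soc := le_antisymm hISoc hSocI
  -- Part 1 : Soc ≃ₗ[R] k
  have hmemSoc : ∀ c : R, c • z ∈ Soc := fun c => Submodule.smul_mem Soc c hzSoc
  set f : R →ₗ[R] ↥Soc :=
    LinearMap.codRestrict Soc (LinearMap.toSpanSingleton R R z) hmemSoc with hfdef
  have hfapp : ∀ c : R, ((f c : ↥Soc) : R) = c * z := fun c => by
    show (LinearMap.toSpanSingleton R R z) c = c * z
    rfl
  have hfsurj : Function.Surjective f := by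
    rintro ⟨y, hy⟩
    have hy' : y ∈ Submodule.span R {z} := by rw [← hIz]; exact hSocI hy
    obtain ⟨c, hc⟩ := Submodule.mem_span_singleton.mp hy'
    refine ⟨c, Subtype.ext ?_⟩
    show ((f c : ↥Soc) : R) = y
    rw [hfapp, ← hc, smul_eq_mul]
  have hker : LinearMap.ker f = IsLocalRing.maximalIdeal R := by
    ext t
    rw [LinearMap.mem_ker]
    constructor
    · intro h0
      by_contra htm
      have htu : IsUnit t := by
        by_contra h'
        exact htm ((IsLocalRing.mem_maximalIdeal _).mpr (mem_nonunits_iff.mpr h'))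
      obtain ⟨v, hv⟩ := htu
      have h1 : t * z = 0 := by
        have h2 := congrArg Subtype.val h0
        rw [hfapp] at h2
        simpa using h2
      apply hzne
      calc z = ↑v⁻¹ * (t * z) := by rw [← hv, ← mul_assoc, Units.inv_mul, one_mul]
        _ = 0 := by rw [h1, mul_zero]
    · intro ht
      apply Subtype.ext
      rw [hfapp]
      have := Submodule.mem_annihilator.mp hzSoc t ht
      simpa [smul_eq_mul, mul_comm] using this
  have e1 : (R ⧸ LinearMap.ker f) ≃ₗ[R] ↥Soc := f.quotKerEquivOfSurjective hfsurj
  have e2 : (R ⧸ LinearMap.ker f) ≃ₗ[R] (R ⧸ IsLocalRing.maximalIdeal R) :=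
    Submodule.quotEquivOfEq _ _ hker
  refine ⟨⟨e1.symm.trans e2⟩, hιbij, ?_⟩
  -- Part 3
  have hSle : Soc ≤ LinearMap.ker π' := le_of_eq hI_Soc.symm
  set ρ₁ : (R ⧸ Soc) →ₗ[R] M := Submodule.liftQ Soc π' hSle with hρ₁def
  have hρinj : Function.Injective ρ₁ := by
    rw [← LinearMap.ker_eq_bot]
    exact Submodule.ker_liftQ_eq_bot _ _ _ (le_of_eq hI_Soc)
  have hρsurj : Function.Surjective ρ₁ := by
    intro m₀
    obtain ⟨c, hc⟩ := hπ'surj m₀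
    exact ⟨Submodule.Quotient.mk c, by rw [hρ₁def, Submodule.liftQ_apply]; exact hc⟩
  refine ⟨LinearEquiv.ofBijective ρ₁ ⟨hρinj, hρsurj⟩, ?_⟩
  refine LinearMap.ext fun c => ?_
  show ρ₁ (Soc.mkQ c) = (φ ∘ₗ ι) c
  rw [hρ₁def, Submodule.mkQ_apply, Submodule.liftQ_apply]
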